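/- For every x ∈ 𝔄 the multiplication operator identity (LU)² = 4L⁶ holds; elementwise, x·(x²·(x·(x²·y))) = 4·x·(x·(x·(x·(x·(x·y))))) for all y ∈ 𝔄. -/
import Mathlib


/-- 𝔄 is a commutative (not necessarily associative) algebra over a field `F` of
characteristic ≠ 2, 3, satisfying the identities `x⁴ = 0` and `x(x²x²) = 0`. -/
theorem stmt_16 {F A : Type*} [Field F] [NonUnitalNonAssocRing A]
    [Module F A] [SMulCommClass F A A] [IsScalarTower F A A]
    (hcomm : ∀ a b : A, a * b = b * a)
    (h2 : (2 : F) ≠ 0) (h3 : (3 : F) ≠ 0)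
    (hx4 : ∀ x : A, x * (x * (x * x)) = 0)
    (hx5 : ∀ x : A, x * ((x * x) * (x * x)) = 0)
    (x y : A) :
    x * (x * x * (x * (x * x * (y)))) = (4 : ℤ) • (x * (x * (x * (x * (x * (x * (y))))))) := by
  -- cancellation helpers
  have cancelF : ∀ c : F, c ≠ 0 → ∀ v : A, c • v = 0 → v = 0 := by
    intro c hc v hv
    simpa [smul_smul, inv_mul_cancel₀ hc] using congrArg (fun a => c⁻¹ • a) hv
  have cancelI : ∀ n : ℤ, ((n : F) ≠ 0) → ∀ v : A, n • v = 0 → v = 0 := by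
    intro n hn v hv
    exact cancelF (n : F) hn v (by rw [Int.cast_smul_eq_zsmul]; exact hv)
  have c2 : ∀ v : A, (2:ℤ) • v = 0 → v = 0 := cancelI 2 (by exact_mod_cast h2)
  have c4 : ∀ v : A, (4:ℤ) • v = 0 → v = 0 := cancelI 4 (by
    have : (4:F) = 2 * 2 := by norm_num
    exact_mod_cast this ▸ mul_ne_zero h2 h2)
  have c6 : ∀ v : A, (6:ℤ) • v = 0 → v = 0 := cancelI 6 (by
    have : (6:F) = 2 * 3 := by norm_num
    exact_mod_cast this ▸ mul_ne_zero h2 h3)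
  have c12 : ∀ v : A, (12:ℤ) • v = 0 → v = 0 := cancelI 12 (by
    have : (12:F) = 2 * (2 * 3) := by norm_num
    exact_mod_cast this ▸ mul_ne_zero h2 (mul_ne_zero h2 h3))
  have c24 : ∀ v : A, (24:ℤ) • v = 0 → v = 0 := cancelI 24 (by
    have : (24:F) = 2 * (2 * (2 * 3)) := by norm_num
    exact_mod_cast this ▸ mul_ne_zero h2 (mul_ne_zero h2 (mul_ne_zero h2 h3)))
  -- expansion of (x+u)^4 (left-normed)
  have exp4 : ∀ u : A, (x+u)*((x+u)*((x+u)*(x+u))) =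
      x*(x*(x*x))
      + (u*(x*(x*x)) + x*(u*(x*x)) + x*(x*(u*x)) + x*(x*(x*u)))
      + (u*(u*(x*x)) + u*(x*(u*x)) + u*(x*(x*u)) + x*(u*(u*x)) + x*(u*(x*u)) + x*(x*(u*u)))
      + (u*(u*(u*x)) + u*(u*(x*u)) + u*(x*(u*u)) + x*(u*(u*u)))
      + u*(u*(u*u)) := by
    intro u; simp only [mul_add, add_mul]; abel
  have hsum4 : ∀ u : A,
      (u*(x*(x*x)) + x*(u*(x*x)) + x*(x*(u*x)) + x*(x*(x*u)))
      + (u*(u*(x*x)) + u*(x*(u*x)) + u*(x*(x*u)) + x*(u*(u*x)) + x*(u*(x*u)) + x*(x*(u*u)))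
      + (u*(u*(u*x)) + u*(u*(x*u)) + u*(x*(u*u)) + x*(u*(u*u))) = 0 := by
    intro u
    have h := hx4 (x+u)
    rw [exp4 u, hx4 x, hx4 u] at h
    linear_combination (norm := abel) h
  -- extract multihomogeneous components (degree 1 and 2 in u)
  have hA12 : ∀ z : A,
      (z*(x*(x*x)) + x*(z*(x*x)) + x*(x*(z*x)) + x*(x*(x*z)) = 0) ∧
      (z*(z*(x*x)) + z*(x*(z*x)) + z*(x*(x*z)) + x*(z*(z*x)) + x*(z*(x*z)) + x*(x*(z*z)) = 0) := by
    intro z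
    have e1 := hsum4 z
    have e2 := hsum4 (-z)
    simp only [neg_mul, mul_neg, neg_neg] at e2
    have e3 := hsum4 (z+z)
    simp only [mul_add, add_mul] at e3
    have ha2 : z*(z*(x*x)) + z*(x*(z*x)) + z*(x*(x*z)) + x*(z*(z*x)) + x*(z*(x*z)) + x*(x*(z*z)) = 0 := by
      refine c2 _ ?_
      linear_combination (norm := abel) e1 + e2
    have ha3 : z*(z*(z*x)) + z*(z*(x*z)) + z*(x*(z*z)) + x*(z*(z*z)) = 0 := by
      refine c6 _ ?_
      linear_combination (norm := abel) e3 - (2:ℤ) • e1 - (2:ℤ) • ha2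
    have ha1 : z*(x*(x*x)) + x*(z*(x*x)) + x*(x*(z*x)) + x*(x*(x*z)) = 0 := by
      refine c2 _ ?_
      linear_combination (norm := abel) e1 - e2 - (2:ℤ) • ha3
    exact ⟨ha1, ha2⟩
  have hA1 : ∀ z : A, z*(x*(x*x)) + x*(z*(x*x)) + x*(x*(z*x)) + x*(x*(x*z)) = 0 :=
    fun z => (hA12 z).1
  have hA2 : ∀ z : A, z*(z*(x*x)) + z*(x*(z*x)) + z*(x*(x*z)) + x*(z*(z*x)) + x*(z*(x*z)) + x*(x*(z*z)) = 0 :=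
    fun z => (hA12 z).2
  -- expansion of (x+u)*(((x+u)Â²)*((x+u)Â²))
  have exp5 : ∀ u : A, (x+u)*(((x+u)*(x+u))*((x+u)*(x+u))) =
      x*((x*x)*(x*x))
      + (u*((x*x)*(x*x)) + x*((u*x)*(x*x)) + x*((x*u)*(x*x)) + x*((x*x)*(u*x)) + x*((x*x)*(x*u)))
      + (u*((u*x)*(x*x)) + u*((x*u)*(x*x)) + u*((x*x)*(u*x)) + u*((x*x)*(x*u)) + x*((u*u)*(x*x))
         + x*((x*x)*(u*u)) + x*((u*x)*(u*x)) + x*((u*x)*(x*u)) + x*((x*u)*(u*x)) + x*((x*u)*(x*u)))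
      + (u*((u*u)*(x*x)) + u*((x*x)*(u*u)) + u*((u*x)*(u*x)) + u*((u*x)*(x*u)) + u*((x*u)*(u*x))
         + u*((x*u)*(x*u)) + x*((u*u)*(u*x)) + x*((u*u)*(x*u)) + x*((u*x)*(u*u)) + x*((x*u)*(u*u)))
      + (x*((u*u)*(u*u)) + u*((u*u)*(u*x)) + u*((u*u)*(x*u)) + u*((u*x)*(u*u)) + u*((x*u)*(u*u)))
      + u*((u*u)*(u*u)) := by
    intro u; simp only [mul_add, add_mul]; abel
  have hsum5 : ∀ u : A,
      (u*((x*x)*(x*x)) + x*((u*x)*(x*x)) + x*((x*u)*(x*x)) + x*((x*x)*(u*x)) + x*((x*x)*(x*u)))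
      + (u*((u*x)*(x*x)) + u*((x*u)*(x*x)) + u*((x*x)*(u*x)) + u*((x*x)*(x*u)) + x*((u*u)*(x*x))
         + x*((x*x)*(u*u)) + x*((u*x)*(u*x)) + x*((u*x)*(x*u)) + x*((x*u)*(u*x)) + x*((x*u)*(x*u)))
      + (u*((u*u)*(x*x)) + u*((x*x)*(u*u)) + u*((u*x)*(u*x)) + u*((u*x)*(x*u)) + u*((x*u)*(u*x))
         + u*((x*u)*(x*u)) + x*((u*u)*(u*x)) + x*((u*u)*(x*u)) + x*((u*x)*(u*u)) + x*((x*u)*(u*u)))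
      + (x*((u*u)*(u*u)) + u*((u*u)*(u*x)) + u*((u*u)*(x*u)) + u*((u*x)*(u*u)) + u*((x*u)*(u*u))) = 0 := by
    intro u
    have h := hx5 (x+u)
    rw [exp5 u, hx5 x, hx5 u] at h
    linear_combination (norm := abel) h
  have hG12 : ∀ z : A,
      (z*((x*x)*(x*x)) + x*((z*x)*(x*x)) + x*((x*z)*(x*x)) + x*((x*x)*(z*x)) + x*((x*x)*(x*z)) = 0) ∧
      (z*((z*x)*(x*x)) + z*((x*z)*(x*x)) + z*((x*x)*(z*x)) + z*((x*x)*(x*z)) + x*((z*z)*(x*x))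
         + x*((x*x)*(z*z)) + x*((z*x)*(z*x)) + x*((z*x)*(x*z)) + x*((x*z)*(z*x)) + x*((x*z)*(x*z)) = 0) := by
    intro z
    have e1 := hsum5 z
    have e2 := hsum5 (-z)
    simp only [neg_mul, mul_neg, neg_neg] at e2
    have e3 := hsum5 (z+z)
    simp only [mul_add, add_mul] at e3
    have e4 := hsum5 (-(z+z))
    simp only [neg_mul, mul_neg, neg_neg, mul_add, add_mul] at e4
    have hg4 : x*((z*z)*(z*z)) + z*((z*z)*(z*x)) + z*((z*z)*(x*z)) + z*((z*x)*(z*z)) + z*((x*z)*(z*z)) = 0 := by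
      refine c24 _ ?_
      linear_combination (norm := abel) e3 + e4 - (4:ℤ) • e1 - (4:ℤ) • e2
    have hg3 : z*((z*z)*(x*x)) + z*((x*x)*(z*z)) + z*((z*x)*(z*x)) + z*((z*x)*(x*z)) + z*((x*z)*(z*x))
         + z*((x*z)*(x*z)) + x*((z*z)*(z*x)) + x*((z*z)*(x*z)) + x*((z*x)*(z*z)) + x*((x*z)*(z*z)) = 0 := by
      refine c12 _ ?_
      linear_combination (norm := abel) e3 - e4 - (2:ℤ) • e1 + (2:ℤ) • e2
    have hg2 : z*((z*x)*(x*x)) + z*((x*z)*(x*x)) + z*((x*x)*(z*x)) + z*((x*x)*(x*z)) + x*((z*z)*(x*x))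
         + x*((x*x)*(z*z)) + x*((z*x)*(z*x)) + x*((z*x)*(x*z)) + x*((x*z)*(z*x)) + x*((x*z)*(x*z)) = 0 := by
      refine c2 _ ?_
      linear_combination (norm := abel) e1 + e2 - (2:ℤ) • hg4
    have hg1 : z*((x*x)*(x*x)) + x*((z*x)*(x*x)) + x*((x*z)*(x*x)) + x*((x*x)*(z*x)) + x*((x*x)*(x*z)) = 0 := by
      refine c2 _ ?_
      linear_combination (norm := abel) e1 - e2 - (2:ℤ) • hg3
    exact ⟨hg1, hg2⟩
  have hG1 : ∀ z : A, z*((x*x)*(x*x)) + x*((z*x)*(x*x)) + x*((x*z)*(x*x)) + x*((x*x)*(z*x)) + x*((x*x)*(x*z)) = 0 :=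
    fun z => (hG12 z).1
  have hG2 : ∀ z : A, z*((z*x)*(x*x)) + z*((x*z)*(x*x)) + z*((x*x)*(z*x)) + z*((x*x)*(x*z)) + x*((z*z)*(x*x))
         + x*((x*x)*(z*z)) + x*((z*x)*(z*x)) + x*((z*x)*(x*z)) + x*((x*z)*(z*x)) + x*((x*z)*(x*z)) = 0 :=
    fun z => (hG12 z).2
  -- polarizations of the quadratic components
  have mixedC : ∀ z w : A,
      z*(w*(x*x)) + w*(z*(x*x)) + z*(x*(w*x)) + w*(x*(z*x)) + z*(x*(x*w)) + w*(x*(x*z))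
      + x*(z*(w*x)) + x*(w*(z*x)) + x*(z*(x*w)) + x*(w*(x*z)) + x*(x*(z*w)) + x*(x*(w*z)) = 0 := by
    intro z w
    have h := hA2 (z+w)
    simp only [mul_add, add_mul] at h
    linear_combination (norm := abel) h - hA2 z - hA2 w
  have mixedD : ∀ z w : A,
      z*((w*x)*(x*x)) + w*((z*x)*(x*x)) + z*((x*w)*(x*x)) + w*((x*z)*(x*x))
      + z*((x*x)*(w*x)) + w*((x*x)*(z*x)) + z*((x*x)*(x*w)) + w*((x*x)*(x*z))
      + x*((z*w)*(x*x)) + x*((w*z)*(x*x)) + x*((x*x)*(z*w)) + x*((x*x)*(w*z))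
      + x*((z*x)*(w*x)) + x*((w*x)*(z*x)) + x*((z*x)*(x*w)) + x*((w*x)*(x*z))
      + x*((x*z)*(w*x)) + x*((x*w)*(z*x)) + x*((x*z)*(x*w)) + x*((x*w)*(x*z)) = 0 := by
    intro z w
    have h := hG2 (z+w)
    simp only [mul_add, add_mul] at h
    linear_combination (norm := abel) h - hG2 z - hG2 w
  -- canonical operator identities
  have opA : ∀ z : A, (x*(x*x))*z + x*((x*x)*z) + (2:ℤ) • (x*(x*(x*z))) = 0 := by
    intro z
    have h := hA1 z
    rw [hcomm z (x*(x*x)), hcomm z (x*x), hcomm z x] at h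
    linear_combination (norm := abel) h
  have opB : ∀ z : A, ((x*x)*(x*x))*z + (4:ℤ) • (x*((x*x)*(x*z))) = 0 := by
    intro z
    have h := hG1 z
    simp only [hcomm z ((x*x)*(x*x)), hcomm z x, hcomm (x*z) (x*x)] at h
    linear_combination (norm := abel) h
  -- s * t = 0  where s = x*x, t = x*(x*x)
  have hst : (x*x)*(x*(x*x)) = 0 := by
    have h := opA (x*x)
    simp only [hcomm (x*(x*x)) (x*x), hx4 x, hx5 x, mul_zero, smul_zero, add_zero, zero_add] at h
    simpa using h
  -- specializations of mixedC
  have opE : ∀ z : A, ((x*x)*(x*x))*z + (x*x)*((x*x)*z) + (2:ℤ)•((x*x)*(x*(x*z)))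
      + (2:ℤ)•(x*((x*(x*x))*z)) + (2:ℤ)•(x*((x*x)*(x*z))) + (2:ℤ)•(x*(x*((x*x)*z))) = 0 := by
    intro z
    have h := mixedC z (x*x)
    simp only [hcomm (x*x) x, hx4 x, hcomm z ((x*x)*(x*x)), hcomm z (x*x), hcomm z x,
      hcomm z (x*(x*x)), mul_zero, zero_mul, add_zero, zero_add] at h
    linear_combination (norm := abel) h
  have opJ : ∀ z : A, (x*(x*x))*((x*x)*z) + (2:ℤ)•((x*(x*x))*(x*(x*z)))
      + (2:ℤ)•(x*((x*(x*x))*(x*z))) + (2:ℤ)•(x*(x*((x*(x*x))*z))) = 0 := by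
    intro z
    have h := mixedC z (x*(x*x))
    simp only [hcomm (x*(x*x)) (x*x), hst, hcomm (x*(x*x)) x, hx4 x, hcomm z (x*x), hcomm z x,
      hcomm z (x*(x*x)), mul_zero, zero_mul, add_zero, zero_add] at h
    linear_combination (norm := abel) h
  -- specializations of mixedD
  have opG : ∀ z : A, (x*x)*((x*x)*(x*z)) + x*((x*x)*((x*x)*z)) + (2:ℤ)•(x*((x*(x*x))*(x*z))) = 0 := by
    intro z
    have h := mixedD z (x*x)
    simp only [hcomm (x*x) x, hcomm (x*(x*x)) (x*x), hst, hcomm z x, hcomm z (x*x),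
      hcomm (x*z) (x*x), hcomm ((x*x)*z) (x*x), hcomm (x*z) (x*(x*x)),
      mul_zero, zero_mul, add_zero, zero_add] at h
    refine c4 _ ?_
    linear_combination (norm := abel) h
  have opM : ∀ z : A, (x*(x*x))*((x*x)*(x*z)) + x*((x*x)*((x*(x*x))*z)) = 0 := by
    intro z
    have h := mixedD z (x*(x*x))
    simp only [hcomm (x*(x*x)) x, hx4 x, hcomm z x, hcomm z (x*(x*x)),
      hcomm (x*z) (x*x), hcomm ((x*(x*x))*z) (x*x),
      mul_zero, zero_mul, add_zero, zero_add] at h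
    refine c4 _ ?_
    linear_combination (norm := abel) h
  -- multiplied versions (apply L on the left)
  have opAL : ∀ z : A, x*((x*(x*x))*z) + x*(x*((x*x)*z)) + (2:ℤ)•(x*(x*(x*(x*z)))) = 0 := by
    intro z
    have h := congrArg (fun a => x * a) (opA z)
    simp only [mul_add, mul_smul_comm, mul_zero] at h
    linear_combination (norm := abel) h
  have opAL2 : ∀ z : A, x*(x*((x*(x*x))*z)) + x*(x*(x*((x*x)*z))) + (2:ℤ)•(x*(x*(x*(x*(x*z))))) = 0 := by
    intro z
    have h := congrArg (fun a => x * a) (opAL z)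
    simp only [mul_add, mul_smul_comm, mul_zero] at h
    linear_combination (norm := abel) h
  have opAUL : ∀ z : A, x*((x*x)*((x*(x*x))*z)) + x*((x*x)*(x*((x*x)*z)))
      + (2:ℤ)•(x*((x*x)*(x*(x*(x*z))))) = 0 := by
    intro z
    have h := congrArg (fun a => x * ((x*x) * a)) (opA z)
    simp only [mul_add, mul_smul_comm, mul_zero] at h
    linear_combination (norm := abel) h
  -- key operator identities
  have opF : ∀ z : A, (x*x)*((x*x)*z) = (2:ℤ)•(x*((x*x)*(x*z))) - (2:ℤ)•((x*x)*(x*(x*z)))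
      + (4:ℤ)•(x*(x*(x*(x*z)))) := by
    intro z
    linear_combination (norm := abel) opE z - opB z - (2:ℤ) • opAL z
  have opFL : ∀ z : A, x*((x*x)*((x*x)*z)) = (2:ℤ)•(x*(x*((x*x)*(x*z))))
      - (2:ℤ)•(x*((x*x)*(x*(x*z)))) + (4:ℤ)•(x*(x*(x*(x*(x*z))))) := by
    intro z
    have h := congrArg (fun a => x * a) (opF z)
    simp only [mul_add, mul_sub, mul_smul_comm] at h
    linear_combination (norm := abel) h
  have opH : ∀ z : A, (x*x)*(x*(x*(x*z))) = (2:ℤ)•(x*(x*(x*(x*(x*z))))) := by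
    intro z
    have h : (2:ℤ) • ((x*x)*(x*(x*(x*z))) - (2:ℤ)•(x*(x*(x*(x*(x*z)))))) = 0 := by
      linear_combination (norm := abel) -(opG z) + (2:ℤ) • opAL (x*z) + opF (x*z) + opFL z
    have h' := c2 _ h
    linear_combination (norm := abel) h'
  have opHL : ∀ z : A, x*((x*x)*(x*(x*(x*z)))) = (2:ℤ)•(x*(x*(x*(x*(x*(x*z)))))) := by
    intro z
    have h := congrArg (fun a => x * a) (opH z)
    simp only [mul_smul_comm] at h
    linear_combination (norm := abel) h
  have opI : ∀ z : A, (x*x)*((x*x)*(x*z)) = (2:ℤ)•(x*((x*x)*(x*(x*z)))) := by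
    intro z
    linear_combination (norm := abel) opF (x*z) - (2:ℤ) • opH z
  have opIL : ∀ z : A, x*((x*x)*((x*x)*(x*z))) = (2:ℤ)•(x*(x*((x*x)*(x*(x*z))))) := by
    intro z
    have h := congrArg (fun a => x * a) (opI z)
    simp only [mul_smul_comm] at h
    linear_combination (norm := abel) h
  have opK : ∀ z : A, x*(x*((x*x)*(x*z))) + x*(x*(x*((x*x)*z)))
      + (4:ℤ)•(x*(x*(x*(x*(x*z))))) = 0 := by
    intro z
    refine c4 _ ?_
    linear_combination (norm := abel) -(opJ z) + opA ((x*x)*z) + (2:ℤ) • opA (x*(x*z))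
      + (2:ℤ) • opAL (x*z) + (2:ℤ) • opAL2 z - opFL z
  -- final assembly
  linear_combination (norm := abel) opAUL y - opM y + opA ((x*x)*(x*y)) - opIL y
    - (2:ℤ) • opK (x*y) - (2:ℤ) • opHL y
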